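/- Let X be a compact metric space and cap the capacity generated by an energy functional, with outer capacity cap*. Then for arbitrary sets E₁, E₂ ⊂ X one has cap(E₁ ∪ E₂) ≤ cap(E₁) + cap*(E₂), where cap denotes inner capacity. -/

import Mathlib

open MeasureTheory
open scoped NNReal ENNReal

/-- Capacity of a set `F` generated by an energy functional `I` on positive measures:
`cap(F) = sup { 1/I(μ,μ) : μ a probability measure supported on F }`. -/
noncomputable def capC {X : Type} [TopologicalSpace X] [MeasurableSpace X]
    (I : Measure X → Measure X → ℝ≥0∞) (F : Set X) : ℝ≥0∞ :=
  ⨆ μ : {μ : ProbabilityMeasure X // (μ : Measure X) Fᶜ = 0},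
    (I (μ : ProbabilityMeasure X) (μ : ProbabilityMeasure X))⁻¹

section aux

variable {X : Type} [TopologicalSpace X] [MeasurableSpace X]
  (I : Measure X → Measure X → ℝ≥0∞)

lemma capC_ge (ν : Measure X) (hν : IsProbabilityMeasure ν) (K : Set X) (hνK : ν Kᶜ = 0) :
    (I ν ν)⁻¹ ≤ capC I K :=
  le_iSup (fun p : {μ : ProbabilityMeasure X // (μ : Measure X) Kᶜ = 0} =>
    (I (p : ProbabilityMeasure X) (p : ProbabilityMeasure X))⁻¹) ⟨⟨ν, hν⟩, hνK⟩

lemma energy_pair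
    (hsymm : ∀ μ ν, I μ ν = I ν μ)
    (hlin : ∀ (t : ℝ≥0) (μ ρ ν : Measure X),
      I ((t : ℝ≥0∞) • μ + ρ) ν = (t : ℝ≥0∞) * I μ ν + I ρ ν)
    (μ ν₁ ν₂ ρ : Measure X) (s₁ s₂ : ℝ≥0)
    (hdec : μ = (s₁ : ℝ≥0∞) • ν₁ + ((s₂ : ℝ≥0∞) • ν₂ + ρ)) :
    (s₁ : ℝ≥0∞) ^ 2 * I ν₁ ν₁ + (s₂ : ℝ≥0∞) ^ 2 * I ν₂ ν₂ ≤ I μ μ := by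
  have e : ∀ ν : Measure X,
      I μ ν = (s₁ : ℝ≥0∞) * I ν₁ ν + ((s₂ : ℝ≥0∞) * I ν₂ ν + I ρ ν) := by
    intro ν
    conv_lhs => rw [hdec]
    rw [hlin, hlin]
  have h1 : (s₁ : ℝ≥0∞) * I ν₁ ν₁ ≤ I ν₁ μ := by
    rw [hsymm ν₁ μ, e ν₁]; exact le_self_add
  have h2 : (s₂ : ℝ≥0∞) * I ν₂ ν₂ ≤ I ν₂ μ := by
    rw [hsymm ν₂ μ, e ν₂, add_comm ((s₁ : ℝ≥0∞) * I ν₁ ν₂)]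
    exact le_trans le_self_add le_self_add
  calc (s₁ : ℝ≥0∞) ^ 2 * I ν₁ ν₁ + (s₂ : ℝ≥0∞) ^ 2 * I ν₂ ν₂
      = (s₁ : ℝ≥0∞) * ((s₁ : ℝ≥0∞) * I ν₁ ν₁) + (s₂ : ℝ≥0∞) * ((s₂ : ℝ≥0∞) * I ν₂ ν₂) := by
        ring
    _ ≤ (s₁ : ℝ≥0∞) * I ν₁ μ + (s₂ : ℝ≥0∞) * I ν₂ μ :=
        add_le_add (mul_le_mul_right h1 _) (mul_le_mul_right h2 _)
    _ ≤ (s₁ : ℝ≥0∞) * I ν₁ μ + ((s₂ : ℝ≥0∞) * I ν₂ μ + I ρ μ) :=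
        add_le_add_right le_self_add _
    _ = I μ μ := (e μ).symm

end aux

section key

set_option linter.unusedSectionVars false

variable {X : Type} [TopologicalSpace X] [MeasurableSpace X]
  (I : Measure X → Measure X → ℝ≥0∞)

/-- Normalized restriction data. -/
lemma restrict_data (μ : Measure X) [IsProbabilityMeasure μ] (K : Set X)
    (hKm : MeasurableSet K) (hs : μ K ≠ 0) :
    ∃ ν : Measure X, IsProbabilityMeasure ν ∧ ν Kᶜ = 0 ∧
      μ.restrict K = ((μ K).toNNReal : ℝ≥0∞) • ν := by
  set s : ℝ≥0 := (μ K).toNNReal with hs_def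
  have hsc : (s : ℝ≥0∞) = μ K := ENNReal.coe_toNNReal (measure_ne_top _ _)
  have hs0 : (s : ℝ≥0∞) ≠ 0 := by rw [hsc]; exact hs
  refine ⟨(s : ℝ≥0∞)⁻¹ • μ.restrict K, ⟨?_⟩, ?_, ?_⟩
  · rw [Measure.smul_apply, smul_eq_mul, Measure.restrict_apply_univ, ← hsc,
      ENNReal.inv_mul_cancel hs0 ENNReal.coe_ne_top]
  · rw [Measure.smul_apply, smul_eq_mul, Measure.restrict_apply hKm.compl]
    simp
  · rw [smul_smul, ENNReal.mul_inv_cancel hs0 ENNReal.coe_ne_top, one_smul]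

lemma keyA
    (hsymm : ∀ μ ν, I μ ν = I ν μ)
    (hlin : ∀ (t : ℝ≥0) (μ ρ ν : Measure X),
      I ((t : ℝ≥0∞) • μ + ρ) ν = (t : ℝ≥0∞) * I μ ν + I ρ ν)
    (μ : Measure X) [IsProbabilityMeasure μ] (K : Set X) (hKm : MeasurableSet K) :
    (μ K) ^ 2 * (I μ μ)⁻¹ ≤ capC I K := by
  by_cases hI : I μ μ = ⊤
  · simp [hI]
  by_cases hs : μ K = 0
  · simp [hs]
  obtain ⟨ν, hν, hνK, hrest⟩ := restrict_data μ K hKm hs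
  set s : ℝ≥0 := (μ K).toNNReal with hs_def
  have hsc : (s : ℝ≥0∞) = μ K := ENNReal.coe_toNNReal (measure_ne_top _ _)
  have hs0 : (s : ℝ≥0∞) ≠ 0 := by rw [hsc]; exact hs
  have hdec : μ = (s : ℝ≥0∞) • ν + ((s : ℝ≥0∞) • (0 : Measure X) + μ.restrict Kᶜ) := by
    rw [smul_zero, zero_add, ← hrest, Measure.restrict_add_restrict_compl hKm]
  have hE : (s : ℝ≥0∞) ^ 2 * I ν ν ≤ I μ μ := by
    have := energy_pair I hsymm hlin μ ν 0 (μ.restrict Kᶜ) s s hdec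
    exact le_trans le_self_add this
  have hs2 : (s : ℝ≥0∞) ^ 2 ≠ 0 := pow_ne_zero _ hs0
  have hs2t : (s : ℝ≥0∞) ^ 2 ≠ ⊤ := ENNReal.pow_ne_top ENNReal.coe_ne_top
  calc (μ K) ^ 2 * (I μ μ)⁻¹ = (s : ℝ≥0∞) ^ 2 * (I μ μ)⁻¹ := by rw [hsc]
    _ ≤ (s : ℝ≥0∞) ^ 2 * ((s : ℝ≥0∞) ^ 2 * I ν ν)⁻¹ :=
        mul_le_mul_right (ENNReal.inv_le_inv.mpr hE) _
    _ = (I ν ν)⁻¹ := by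
        rw [ENNReal.mul_inv (Or.inl hs2) (Or.inl hs2t), ← mul_assoc,
          ENNReal.mul_inv_cancel hs2 hs2t, one_mul]
    _ ≤ capC I K := capC_ge I ν hν K hνK

end key

section key2

set_option linter.unusedSectionVars false

variable {X : Type} [TopologicalSpace X] [MeasurableSpace X]
  (I : Measure X → Measure X → ℝ≥0∞)

lemma keyB
    (hsymm : ∀ μ ν, I μ ν = I ν μ)
    (hlin : ∀ (t : ℝ≥0) (μ ρ ν : Measure X),
      I ((t : ℝ≥0∞) • μ + ρ) ν = (t : ℝ≥0∞) * I μ ν + I ρ ν)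
    (μ : Measure X) [IsProbabilityMeasure μ] (K₁ K₂ : Set X)
    (h₁ : MeasurableSet K₁) (h₂ : MeasurableSet K₂) (hd : Disjoint K₁ K₂) :
    (μ K₁ + μ K₂) ^ 2 * (I μ μ)⁻¹ ≤ capC I K₁ + capC I K₂ := by
  by_cases hI : I μ μ = ⊤
  · simp [hI]
  by_cases hz1 : μ K₁ = 0
  · rw [hz1, zero_add]
    exact le_trans (keyA I hsymm hlin μ K₂ h₂) le_add_self
  by_cases hz2 : μ K₂ = 0
  · rw [hz2, add_zero]
    exact le_trans (keyA I hsymm hlin μ K₁ h₁) le_self_add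
  obtain ⟨ν₁, hν₁, hν₁K, hrest₁⟩ := restrict_data μ K₁ h₁ hz1
  obtain ⟨ν₂, hν₂, hν₂K, hrest₂⟩ := restrict_data μ K₂ h₂ hz2
  set s₁ : ℝ≥0 := (μ K₁).toNNReal with hs₁_def
  set s₂ : ℝ≥0 := (μ K₂).toNNReal with hs₂_def
  have hsc₁ : (s₁ : ℝ≥0∞) = μ K₁ := ENNReal.coe_toNNReal (measure_ne_top _ _)
  have hsc₂ : (s₂ : ℝ≥0∞) = μ K₂ := ENNReal.coe_toNNReal (measure_ne_top _ _)
  have hs₁0 : (s₁ : ℝ≥0∞) ≠ 0 := by rw [hsc₁]; exact hz1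
  have hs₂0 : (s₂ : ℝ≥0∞) ≠ 0 := by rw [hsc₂]; exact hz2
  have hdec : μ = (s₁ : ℝ≥0∞) • ν₁ + ((s₂ : ℝ≥0∞) • ν₂ + μ.restrict (K₁ ∪ K₂)ᶜ) := by
    rw [← hrest₁, ← hrest₂, ← add_assoc, ← Measure.restrict_union hd h₂,
      Measure.restrict_add_restrict_compl (h₁.union h₂)]
  have hE : (s₁ : ℝ≥0∞) ^ 2 * I ν₁ ν₁ + (s₂ : ℝ≥0∞) ^ 2 * I ν₂ ν₂ ≤ I μ μ :=
    energy_pair I hsymm hlin μ ν₁ ν₂ _ s₁ s₂ hdec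
  have hcap₁ : (I ν₁ ν₁)⁻¹ ≤ capC I K₁ := capC_ge I ν₁ hν₁ K₁ hν₁K
  have hcap₂ : (I ν₂ ν₂)⁻¹ ≤ capC I K₂ := capC_ge I ν₂ hν₂ K₂ hν₂K
  set a₁ : ℝ≥0∞ := I ν₁ ν₁ with ha₁_def
  set a₂ : ℝ≥0∞ := I ν₂ ν₂ with ha₂_def
  clear_value a₁ a₂
  by_cases ha₁0 : a₁ = 0
  · rw [ha₁0, ENNReal.inv_zero] at hcap₁
    exact le_trans le_top (le_trans hcap₁ le_self_add)
  by_cases ha₂0 : a₂ = 0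
  · rw [ha₂0, ENNReal.inv_zero] at hcap₂
    exact le_trans le_top (le_trans hcap₂ le_add_self)
  have hs₁2 : (s₁ : ℝ≥0∞) ^ 2 ≠ 0 := pow_ne_zero _ hs₁0
  have hs₂2 : (s₂ : ℝ≥0∞) ^ 2 ≠ 0 := pow_ne_zero _ hs₂0
  have ha₁t : a₁ ≠ ⊤ := by
    intro h
    exact hI (top_le_iff.mp (le_trans (by rw [h, ENNReal.mul_top hs₁2]; exact le_self_add) hE))
  have ha₂t : a₂ ≠ ⊤ := by
    intro h
    exact hI (top_le_iff.mp (le_trans (by rw [h, ENNReal.mul_top hs₂2]; exact le_add_self) hE))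
  have hden0 : (s₁ : ℝ≥0∞) ^ 2 * a₁ + (s₂ : ℝ≥0∞) ^ 2 * a₂ ≠ 0 := by
    intro h
    exact (mul_ne_zero hs₁2 ha₁0) (add_eq_zero.mp h).1
  have hdent : (s₁ : ℝ≥0∞) ^ 2 * a₁ + (s₂ : ℝ≥0∞) ^ 2 * a₂ ≠ ⊤ :=
    ENNReal.add_ne_top.mpr ⟨ENNReal.mul_ne_top (ENNReal.pow_ne_top ENNReal.coe_ne_top) ha₁t,
      ENNReal.mul_ne_top (ENNReal.pow_ne_top ENNReal.coe_ne_top) ha₂t⟩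
  have hmain : ((s₁ : ℝ≥0∞) + s₂) ^ 2 * ((s₁ : ℝ≥0∞) ^ 2 * a₁ + (s₂ : ℝ≥0∞) ^ 2 * a₂)⁻¹
      ≤ a₁⁻¹ + a₂⁻¹ := by
    rw [← div_eq_mul_inv, ENNReal.div_le_iff hden0 hdent]
    lift a₁ to ℝ≥0 using ha₁t with b₁
    lift a₂ to ℝ≥0 using ha₂t with b₂
    have hb₁0 : b₁ ≠ 0 := by exact_mod_cast ha₁0
    have hb₂0 : b₂ ≠ 0 := by exact_mod_cast ha₂0
    rw [← ENNReal.coe_inv hb₁0, ← ENNReal.coe_inv hb₂0]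
    norm_cast
    rw [← NNReal.coe_le_coe]
    push_cast
    have hb₁p : (0 : ℝ) < b₁ := by positivity
    have hb₂p : (0 : ℝ) < b₂ := by positivity
    rw [inv_eq_one_div, inv_eq_one_div, div_add_div _ _ hb₁p.ne' hb₂p.ne',
      div_mul_eq_mul_div, le_div_iff₀ (by positivity)]
    nlinarith [sq_nonneg ((s₁ : ℝ) * b₁ - (s₂ : ℝ) * b₂), (s₁ : ℝ≥0).coe_nonneg, (s₂ : ℝ≥0).coe_nonneg, mul_pos hb₁p hb₂p]
  calc (μ K₁ + μ K₂) ^ 2 * (I μ μ)⁻¹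
      = ((s₁ : ℝ≥0∞) + s₂) ^ 2 * (I μ μ)⁻¹ := by rw [hsc₁, hsc₂]
    _ ≤ ((s₁ : ℝ≥0∞) + s₂) ^ 2 * ((s₁ : ℝ≥0∞) ^ 2 * a₁ + (s₂ : ℝ≥0∞) ^ 2 * a₂)⁻¹ :=
        mul_le_mul_right (ENNReal.inv_le_inv.mpr hE) _
    _ ≤ a₁⁻¹ + a₂⁻¹ := hmain
    _ ≤ capC I K₁ + capC I K₂ := add_le_add hcap₁ hcap₂

end key2


/-- Inner capacity of an arbitrary set, by approximation from within by compact sets. -/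
noncomputable def capInner {X : Type} [TopologicalSpace X] [MeasurableSpace X]
    (I : Measure X → Measure X → ℝ≥0∞) (E : Set X) : ℝ≥0∞ :=
  ⨆ F : {F : Set X // IsCompact F ∧ F ⊆ E}, capC I (F : Set X)

/-- Outer capacity of an arbitrary set, by approximation from outside by open sets. -/
noncomputable def capOuter {X : Type} [TopologicalSpace X] [MeasurableSpace X]
    (I : Measure X → Measure X → ℝ≥0∞) (E : Set X) : ℝ≥0∞ :=
  ⨅ G : {G : Set X // IsOpen G ∧ E ⊆ G}, capInner I (G : Set X)

lemma mainG {X : Type} [MetricSpace X] [CompactSpace X] [MeasurableSpace X] [BorelSpace X]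
    (I : Measure X → Measure X → ℝ≥0∞)
    (hsymm : ∀ μ ν, I μ ν = I ν μ)
    (hlin : ∀ (t : ℝ≥0) (μ ρ ν : Measure X),
      I ((t : ℝ≥0∞) • μ + ρ) ν = (t : ℝ≥0∞) * I μ ν + I ρ ν)
    (E₁ F G : Set X) (hFc : IsCompact F) (hFE : F ⊆ E₁ ∪ G) (hG : IsOpen G)
    (μ : Measure X) [IsProbabilityMeasure μ] (hμF : μ Fᶜ = 0) :
    (I μ μ)⁻¹ ≤ capInner I E₁ + capInner I G := by
  set C := capInner I E₁ + capInner I G with hC_def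
  have hFm : MeasurableSet F := hFc.isClosed.measurableSet
  have hSm : MeasurableSet (F ∩ G) := hFm.inter hG.measurableSet
  have hK₁c : IsCompact (F \ G) := hFc.diff hG
  have hK₁E : F \ G ⊆ E₁ := fun x hx => (hFE hx.1).resolve_right fun h => hx.2 h
  have h1 : μ F = 1 := (prob_compl_eq_zero_iff hFm).mp hμF
  have hsplit : μ (F \ G) + μ (F ∩ G) = 1 := by
    rw [← measure_union (Set.disjoint_sdiff_left.mono_right Set.inter_subset_right) hSm,
      Set.diff_union_inter, h1]
  have hcap1 : capC I (F \ G) ≤ capInner I E₁ :=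
    le_iSup (fun p : {F : Set X // IsCompact F ∧ F ⊆ E₁} => capC I (p : Set X))
      ⟨F \ G, hK₁c, hK₁E⟩
  have claim : ∀ δ : ℝ≥0∞, δ ≠ 0 →
      ∃ t : ℝ≥0∞, t ≤ 1 ∧ 1 ≤ t + δ ∧ t ^ 2 * (I μ μ)⁻¹ ≤ C := by
    intro δ hδ
    obtain ⟨K, hKS, hKc, hKμ⟩ := hSm.exists_isCompact_lt_add (μ := μ) (measure_ne_top _ _) hδ
    have hcap2 : capC I K ≤ capInner I G :=
      le_iSup (fun p : {F : Set X // IsCompact F ∧ F ⊆ G} => capC I (p : Set X))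
        ⟨K, hKc, hKS.trans Set.inter_subset_right⟩
    refine ⟨μ (F \ G) + μ K, ?_, ?_, ?_⟩
    · calc μ (F \ G) + μ K ≤ μ (F \ G) + μ (F ∩ G) := add_le_add_right (measure_mono hKS) _
        _ = 1 := hsplit
    · calc (1 : ℝ≥0∞) = μ (F \ G) + μ (F ∩ G) := hsplit.symm
        _ ≤ μ (F \ G) + (μ K + δ) := add_le_add_right hKμ.le _
        _ = μ (F \ G) + μ K + δ := (add_assoc _ _ _).symm
    · calc (μ (F \ G) + μ K) ^ 2 * (I μ μ)⁻¹ ≤ capC I (F \ G) + capC I K :=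
          keyB I hsymm hlin μ (F \ G) K (hFm.diff hG.measurableSet) hKc.isClosed.measurableSet
            (Set.disjoint_sdiff_left.mono_right (hKS.trans Set.inter_subset_right))
        _ ≤ C := add_le_add hcap1 hcap2
  set x := (I μ μ)⁻¹ with hx_def
  by_cases hxt : x = ⊤
  · obtain ⟨t, ht1, ht2, ht3⟩ := claim (1 / 2) (by norm_num)
    have ht0 : t ≠ 0 := by
      rintro rfl
      rw [zero_add] at ht2
      norm_num at ht2
    rw [hxt, ENNReal.mul_top (pow_ne_zero 2 ht0)] at ht3
    exact le_trans le_top ht3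
  apply ENNReal.le_of_forall_pos_le_add
  intro ε hε hC
  by_cases hx0 : x = 0
  · rw [hx0]; exact zero_le
  have h3x0 : 3 * x ≠ 0 := by simp [hx0]
  have h3xt : 3 * x ≠ ⊤ := ENNReal.mul_ne_top (by norm_num) hxt
  set δ : ℝ≥0∞ := min ((ε : ℝ≥0∞) / (3 * x)) 1 with hδ_def
  have hδ0 : δ ≠ 0 :=
    (lt_min (ENNReal.div_pos (by exact_mod_cast hε.ne') h3xt) one_pos).ne'
  have hδ1 : δ ≤ 1 := min_le_right _ _
  obtain ⟨t, ht1, ht2, ht3⟩ := claim δ hδ0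
  have hδε : 3 * δ * x ≤ ε := by
    calc 3 * δ * x = δ * (3 * x) := by ring
      _ ≤ (ε : ℝ≥0∞) / (3 * x) * (3 * x) := mul_le_mul_left (min_le_left _ _) _
      _ = ε := ENNReal.div_mul_cancel h3x0 h3xt
  have hsmall : (2 * t * δ + δ ^ 2) * x ≤ ε := by
    refine le_trans (mul_le_mul_left ?_ x) hδε
    calc 2 * t * δ + δ ^ 2 ≤ 2 * 1 * δ + 1 * δ := by
          refine add_le_add (mul_le_mul_left (mul_le_mul_right ht1 2) δ) ?_
          rw [sq]
          exact mul_le_mul_left hδ1 δ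
      _ = 3 * δ := by ring
  calc x = 1 ^ 2 * x := by rw [one_pow, one_mul]
    _ ≤ (t + δ) ^ 2 * x := mul_le_mul_left (pow_le_pow_left' ht2 2) x
    _ = t ^ 2 * x + (2 * t * δ + δ ^ 2) * x := by rw [add_sq, add_mul, add_mul]; ring
    _ ≤ C + ε := add_le_add ht3 hsmall


/-- Strong subadditivity mixing inner and outer capacity: for a capacity generated by a
symmetric, bi-additive, positively homogeneous, weak*-lower-semicontinuous energy
functional `I` on a compact metric space `X` (with the finite-energy cone closed under
restriction to compact sets), arbitrary sets `E₁, E₂ ⊆ X` satisfy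
`cap(E₁ ∪ E₂) ≤ cap(E₁) + cap*(E₂)`, where `cap` is the inner capacity. -/
theorem stmt15 {X : Type} [MetricSpace X] [CompactSpace X] [MeasurableSpace X] [BorelSpace X]
    (I : Measure X → Measure X → ℝ≥0∞)
    (hsymm : ∀ μ ν, I μ ν = I ν μ)
    (hlin : ∀ (t : ℝ≥0) (μ ρ ν : Measure X),
      I ((t : ℝ≥0∞) • μ + ρ) ν = (t : ℝ≥0∞) * I μ ν + I ρ ν)
    (hrest : ∀ (μ : Measure X) (F : Set X), IsCompact F → I μ μ < ⊤ →
      I (μ.restrict F) (μ.restrict F) < ⊤)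
    (hlsc : LowerSemicontinuous fun μ : ProbabilityMeasure X => I μ μ)
    (E₁ E₂ : Set X) :
    capInner I (E₁ ∪ E₂) ≤ capInner I E₁ + capOuter I E₂ := by
  rw [capInner]
  refine iSup_le ?_
  rintro ⟨F, hFc, hFE⟩
  rw [capC]
  refine iSup_le ?_
  rintro ⟨μ, hμ⟩
  rw [capOuter, ENNReal.add_iInf]
  refine le_iInf ?_
  rintro ⟨G, hGo, hGE⟩
  exact mainG I hsymm hlin E₁ F G hFc
    (hFE.trans (Set.union_subset_union_right E₁ hGE)) hGo
    ((μ : ProbabilityMeasure X) : Measure X) hμ
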